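/- The unsigned Stirling numbers of the first kind are log-concave in k: for all n ≥ 1 and all k with 1 ≤ k ≤ n − 1, one has s(n, k−1) · s(n, k+1) ≤ s(n, k)². -/

import Mathlib

/-- The number of cycles of a permutation of `{1,…,n}` (here `Fin n`),
counting fixed points as cycles of length one. -/
def cycleCount {n : ℕ} (π : Equiv.Perm (Fin n)) : ℕ :=
  π.cycleType.card + (Finset.univ.filter fun x => π x = x).card

/-- The unsigned Stirling number of the first kind `s(n,k)`: the number of
permutations of an `n`-element set with exactly `k` cycles (fixed points
counting as cycles of length one). -/
def stirlingFirst (n k : ℕ) : ℕ :=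
  (Finset.univ.filter fun π : Equiv.Perm (Fin n) => cycleCount π = k).card

open Equiv Equiv.Perm Finset

section Splice

variable {α : Type*} [DecidableEq α] [Fintype α]

/-- Auxiliary cycle count. -/
private def cc (σ : Perm α) : ℕ :=
  Multiset.card σ.cycleType + (Fintype.card α - σ.support.card)

private lemma splice_support {c : Perm α} {a b : α} (ha : c a = a) (hb : b ∈ c.support) :
    (swap a b * c).support = insert a c.support := by
  have hba : b ≠ a := fun h => by rw [h, mem_support] at hb; exact hb ha
  ext x
  simp only [Finset.mem_insert, mem_support, Perm.mul_apply]
  rcases eq_or_ne x a with rfl | hxa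
  · simpa [ha] using hba
  · rcases eq_or_ne (c x) x with hcx | hcx
    · have hxb : x ≠ b := by rintro rfl; rw [mem_support] at hb; exact hb hcx
      rw [hcx, swap_apply_of_ne_of_ne hxa hxb]
      simp [hxa, hcx]
    · have hcxa : c x ≠ a := fun h => hxa (c.injective (h.trans ha.symm))
      rcases eq_or_ne (c x) b with hcb | hcb
      · have hbx : b ≠ x := hcb ▸ hcx
        rw [hcb, swap_apply_right]
        simp [Ne.symm hxa, hbx]
      · rw [swap_apply_of_ne_of_ne hcxa hcb]
        simp [hxa, hcx]

private lemma splice_isCycle {c : Perm α} {a b : α} (hc : c.IsCycle) (ha : c a = a)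
    (hb : b ∈ c.support) : (swap a b * c).IsCycle := by
  have hba : b ≠ a := fun h => by rw [h, mem_support] at hb; exact hb ha
  set π := swap a b * c with hπ
  have hπa : π a = b := by simp [hπ, ha]
  have hab : SameCycle π a b := ⟨1, by simp [hπa]⟩
  have step : ∀ z ∈ c.support, SameCycle π a z → SameCycle π a (c z) := by
    intro z hz hsz
    rcases eq_or_ne (c z) b with h | h
    · rw [h]; exact hab
    · have hza : z ≠ a := by rintro rfl; rw [mem_support] at hz; exact hz ha
      have hcza : c z ≠ a := fun hh => hza (c.injective (hh.trans ha.symm))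
      have hπz : π z = c z := by
        simp [hπ, swap_apply_of_ne_of_ne hcza h]
      exact hsz.trans ⟨1, by simp [hπz]⟩
  have hpow : ∀ k : ℕ, SameCycle π a ((c ^ k) b) := by
    intro k
    induction k with
    | zero => simpa using hab
    | succ k ih =>
      have hmem : (c ^ k) b ∈ c.support := pow_apply_mem_support.2 hb
      rw [pow_succ', Perm.mul_apply]
      exact step _ hmem ih
  refine ⟨a, by rw [hπa]; exact hba, fun y hy => ?_⟩
  have hy' : y ∈ π.support := mem_support.2 hy
  rw [hπ, splice_support ha hb] at hy'
  rcases Finset.mem_insert.1 hy' with rfl | hy''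
  · exact SameCycle.refl _ _
  · obtain ⟨i, _, hi⟩ :=
      (hc.sameCycle (mem_support.1 hb) (mem_support.1 hy'')).exists_pow_eq_of_mem_support hb
    exact hi ▸ hpow i

private lemma splice_cc (σ : Perm α) (a b : α) (ha : σ a = a) (hba : b ≠ a) :
    cc (swap a b * σ) + 1 = cc σ := by
  have hbσ : ∀ x, σ x = x → x ∉ σ.support := fun x h => by simp [mem_support, h]
  by_cases hb : σ b = b
  · -- disjoint case
    have hd : Disjoint (swap a b) σ := by
      intro x
      rcases eq_or_ne x a with rfl | hxa
      · exact Or.inr ha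
      rcases eq_or_ne x b with rfl | hxb
      · exact Or.inr hb
      · exact Or.inl (swap_apply_of_ne_of_ne hxa hxb)
    have hct : (swap a b * σ).cycleType = (swap a b).cycleType + σ.cycleType := hd.cycleType_mul
    have hswct : (swap a b).cycleType = {2} := by
      rw [(isCycle_swap (Ne.symm hba)).cycleType, card_support_swap (Ne.symm hba)]
    have hsupp : (swap a b * σ).support.card = 2 + σ.support.card := by
      rw [hd.card_support_mul, card_support_swap (Ne.symm hba)]
    have hbound : σ.support.card + 2 ≤ Fintype.card α := by
      have : insert a (insert b σ.support) ⊆ Finset.univ := Finset.subset_univ _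
      have hcard := Finset.card_le_card this
      rw [Finset.card_insert_of_notMem, Finset.card_insert_of_notMem (hbσ b hb)] at hcard
      · simp only [Finset.card_univ] at hcard
        omega
      · simp [hbσ a ha, hba.symm]
    simp only [cc, hct, hswct, hsupp, Multiset.card_add, Multiset.card_singleton]
    omega
  · -- b is in a cycle of σ
    set c := σ.cycleOf b with hc
    have hcmem : c ∈ σ.cycleFactorsFinset := cycleOf_mem_cycleFactorsFinset_iff.2 (mem_support.2 hb)
    have hcycle : c.IsCycle := isCycle_cycleOf σ hb
    have hca : c a = a := by
      rw [hc, cycleOf_apply]; split_ifs <;> simp [ha]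
    have hbc : b ∈ c.support := mem_support_cycleOf_iff.2 ⟨SameCycle.refl _ _, mem_support.2 hb⟩
    set d := σ * c⁻¹ with hdd
    have hd : Disjoint d c := disjoint_mul_inv_of_mem_cycleFactorsFinset hcmem
    have hσeq : σ = d * c := by rw [hdd, mul_assoc, inv_mul_cancel, mul_one]
    have hda : d a = a := by
      have hinv : c⁻¹ a = a := by
        rw [Equiv.Perm.inv_eq_iff_eq, hca]
      rw [hdd, Perm.mul_apply, hinv, ha]
    have hdb : d b = b := (hd b).resolve_right (mem_support.1 hbc)
    have hdsw : Disjoint (swap a b) d := by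
      intro x
      rcases eq_or_ne x a with rfl | hxa
      · exact Or.inr hda
      rcases eq_or_ne x b with rfl | hxb
      · exact Or.inr hdb
      · exact Or.inl (swap_apply_of_ne_of_ne hxa hxb)
    have hrw : swap a b * σ = d * (swap a b * c) := by
      rw [hσeq, ← mul_assoc, hdsw.commute.eq, mul_assoc]
    have hanc : a ∉ c.support := by simp [mem_support, hca]
    have hc' : (swap a b * c).IsCycle := splice_isCycle hcycle hca hbc
    have hsupp' : (swap a b * c).support = insert a c.support := splice_support hca hbc
    have hd' : Disjoint d (swap a b * c) := by
      intro x
      by_cases hdx : d x = x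
      · exact Or.inl hdx
      · have hcx : c x = x := (hd x).resolve_left hdx
        have hxa : x ≠ a := fun h => hdx (h ▸ hda)
        have hxb : x ≠ b := fun h => hdx (h ▸ hdb)
        exact Or.inr (by rw [Perm.mul_apply, hcx, swap_apply_of_ne_of_ne hxa hxb])
    have hctπ : (swap a b * σ).cycleType = d.cycleType + {(swap a b * c).support.card} := by
      rw [hrw, hd'.cycleType_mul, hc'.cycleType]
    have hctσ : σ.cycleType = d.cycleType + {c.support.card} := by
      rw [hσeq, hd.cycleType_mul, hcycle.cycleType]
    have hsπ : (swap a b * σ).support.card = d.support.card + (c.support.card + 1) := by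
      rw [hrw, hd'.card_support_mul, hsupp', Finset.card_insert_of_notMem hanc]
    have hsσ : σ.support.card = d.support.card + c.support.card := by
      rw [hσeq, hd.card_support_mul]
    have hbound : (swap a b * σ).support.card ≤ Fintype.card α := by
      simpa [Finset.card_univ] using Finset.card_le_card ((swap a b * σ).support.subset_univ)
    simp only [cc, hctπ, hctσ, hsπ, hsσ, Multiset.card_add, Multiset.card_singleton] at *
    omega

end Splice

section FinRec

private lemma cycleCount_eq_cc' {n : ℕ} (π : Equiv.Perm (Fin n)) :
    π.cycleType.card + (Finset.univ.filter fun x => π x = x).card = cc π := by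
  have : (Finset.univ.filter fun x => π x = x) = π.supportᶜ := by
    ext x; simp [Equiv.Perm.mem_support]
  rw [cc, this, Finset.card_compl, Fintype.card_fin]

/-- The equiv sending `Fin n` into the nonzero elements of `Fin (n+1)`. -/
private def finSuccNe (n : ℕ) : Fin n ≃ {x : Fin (n + 1) // x ≠ 0} where
  toFun x := ⟨x.succ, Fin.succ_ne_zero x⟩
  invFun y := y.1.pred y.2
  left_inv x := by simp
  right_inv y := by simp

private lemma decomposeFin_zero_eq {n : ℕ} (e : Equiv.Perm (Fin n)) :
    Equiv.Perm.decomposeFin.symm (0, e) = e.extendDomain (finSuccNe n) := by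
  ext x
  refine Fin.cases ?_ (fun i => ?_) x
  · rw [Equiv.Perm.decomposeFin_symm_apply_zero,
      Equiv.Perm.extendDomain_apply_not_subtype]
    simp
  · have h1 : Equiv.Perm.decomposeFin.symm (0, e) i.succ = (e i).succ := by
      simp
    have h2 : (e.extendDomain (finSuccNe n)) i.succ = (e i).succ :=
      Equiv.Perm.extendDomain_apply_image e (finSuccNe n) i
    rw [h1, h2]

private lemma cc_decomposeFin_zero {n : ℕ} (e : Equiv.Perm (Fin n)) :
    cc (Equiv.Perm.decomposeFin.symm (0, e)) = cc e + 1 := by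
  rw [decomposeFin_zero_eq]
  have hct : (e.extendDomain (finSuccNe n)).cycleType = e.cycleType :=
    Equiv.Perm.cycleType_extendDomain _
  have hs : (e.extendDomain (finSuccNe n)).support.card = e.support.card := by
    rw [← Equiv.Perm.sum_cycleType, ← Equiv.Perm.sum_cycleType, hct]
  have hsn : e.support.card ≤ n := by
    simpa [Finset.card_univ] using Finset.card_le_card e.support.subset_univ
  simp only [cc, hct, hs, Fintype.card_fin]
  omega

private lemma decomposeFin_eq_swap_mul {n : ℕ} (p : Fin (n + 1)) (e : Equiv.Perm (Fin n)) :
    Equiv.Perm.decomposeFin.symm (p, e) =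
      swap 0 p * Equiv.Perm.decomposeFin.symm (0, e) := by
  ext x
  refine Fin.cases ?_ (fun i => ?_) x <;> simp

private lemma cc_decomposeFin_succ {n : ℕ} (p : Fin (n + 1)) (hp : p ≠ 0)
    (e : Equiv.Perm (Fin n)) :
    cc (Equiv.Perm.decomposeFin.symm (p, e)) = cc e := by
  have h0 : (Equiv.Perm.decomposeFin.symm (0, e)) 0 = 0 := by simp
  have := splice_cc (Equiv.Perm.decomposeFin.symm (0, e)) 0 p h0 hp
  rw [← decomposeFin_eq_swap_mul, cc_decomposeFin_zero] at this
  omega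

private lemma stirlingFirst_eq_cc (n k : ℕ) :
    stirlingFirst n k = (Finset.univ.filter fun π : Equiv.Perm (Fin n) => cc π = k).card := by
  unfold stirlingFirst cycleCount
  congr 1
  ext π
  simp [cycleCount_eq_cc' π]

private lemma stirlingFirst_succ_succ (n k : ℕ) :
    stirlingFirst (n + 1) (k + 1) = stirlingFirst n k + n * stirlingFirst n (k + 1) := by
  rw [stirlingFirst_eq_cc, stirlingFirst_eq_cc, stirlingFirst_eq_cc]
  rw [Finset.card_filter, Finset.card_filter, Finset.card_filter]
  rw [← Equiv.sum_comp Equiv.Perm.decomposeFin.symm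
    (fun π : Equiv.Perm (Fin (n + 1)) => if cc π = k + 1 then 1 else 0)]
  rw [Fintype.sum_prod_type, Fin.sum_univ_succ]
  congr 1
  · apply Finset.sum_congr rfl
    intro e _
    rw [cc_decomposeFin_zero]
    simp
  · have h : ∀ i : Fin n,
        (∑ e : Equiv.Perm (Fin n),
          if cc (Equiv.Perm.decomposeFin.symm (i.succ, e)) = k + 1 then 1 else 0) =
        ∑ e : Equiv.Perm (Fin n), if cc e = k + 1 then 1 else 0 := by
      intro i
      apply Finset.sum_congr rfl
      intro e _
      rw [cc_decomposeFin_succ _ (Fin.succ_ne_zero i)]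
    rw [Finset.sum_congr rfl (fun i _ => h i), Finset.sum_const, Finset.card_univ,
      Fintype.card_fin, smul_eq_mul]

private lemma st_zero (k : ℕ) : stirlingFirst 0 k = if k = 0 then 1 else 0 := by
  unfold stirlingFirst
  have h : ∀ π : Equiv.Perm (Fin 0), cycleCount π = 0 := by
    intro π
    have hπ : π = 1 := Subsingleton.elim _ _
    subst hπ
    simp [cycleCount]
  split_ifs with hk
  · subst hk
    rw [Finset.filter_true_of_mem (fun π _ => h π)]
    simp [Finset.card_univ, Fintype.card_perm]
  · rw [Finset.filter_false_of_mem, Finset.card_empty]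
    intro π _
    rw [h π]
    omega

private lemma st_succ_zero (n : ℕ) : stirlingFirst (n + 1) 0 = 0 := by
  unfold stirlingFirst
  rw [Finset.filter_false_of_mem, Finset.card_empty]
  intro π _
  by_cases h : π = 1
  · subst h
    simp [cycleCount, Finset.card_univ]
  · have h2 : Multiset.card π.cycleType ≠ 0 := fun hc =>
      h (Equiv.Perm.card_cycleType_eq_zero.1 hc)
    unfold cycleCount
    omega

private lemma st_vanish (n : ℕ) : ∀ k, n < k → stirlingFirst n k = 0 := by
  induction n with
  | zero =>
    intro k hk
    rw [st_zero, if_neg (by omega : ¬k = 0)]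
  | succ n ih =>
    intro k hk
    obtain ⟨k, rfl⟩ : ∃ k', k = k' + 1 := ⟨k - 1, by omega⟩
    rw [stirlingFirst_succ_succ, ih k (by omega), ih (k + 1) (by omega)]
    simp

private lemma st_pos : ∀ n k, 1 ≤ k → k ≤ n → 0 < stirlingFirst n k := by
  intro n
  induction n with
  | zero => intro k h1 h2; omega
  | succ n ih =>
    intro k h1 h2
    obtain ⟨k, rfl⟩ : ∃ k', k = k' + 1 := ⟨k - 1, by omega⟩
    rw [stirlingFirst_succ_succ]
    rcases Nat.eq_zero_or_pos k with rfl | hk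
    · rcases Nat.eq_zero_or_pos n with rfl | hn
      · simp [st_zero]
      · have hp := ih 1 le_rfl hn
        have := Nat.mul_pos hn hp
        simp only [Nat.zero_add]
        omega
    · have := ih k hk (by omega)
      omega

private lemma st_lc (n : ℕ) :
    ∀ k, stirlingFirst n k * stirlingFirst n (k + 2) ≤ stirlingFirst n (k + 1) ^ 2 := by
  induction n with
  | zero =>
    intro k
    rw [st_vanish 0 (k + 2) (by omega)]
    simp
  | succ n ih =>
    intro k
    rcases k with _ | k
    · rw [st_succ_zero]
      simp
    · have h1 := ih k
      have h2 := ih (k + 1)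
      have h3 : stirlingFirst n k * stirlingFirst n (k + 3) ≤
          stirlingFirst n (k + 1) * stirlingFirst n (k + 2) := by
        by_cases hz : stirlingFirst n (k + 1) * stirlingFirst n (k + 2) = 0
        · rcases Nat.mul_eq_zero.1 hz with h | h
          · have hn : n < k + 1 := by
              by_contra hc
              push_neg at hc
              exact absurd h (st_pos n (k + 1) (by omega) hc).ne'
            rw [st_vanish n (k + 3) (by omega)]
            simp
          · have hn : n < k + 2 := by
              by_contra hc
              push_neg at hc
              exact absurd h (st_pos n (k + 2) (by omega) hc).ne'
            rw [st_vanish n (k + 3) (by omega)]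
            simp
        · have hpos : 0 < stirlingFirst n (k + 1) * stirlingFirst n (k + 2) :=
            Nat.pos_of_ne_zero hz
          refine Nat.le_of_mul_le_mul_left ?_ hpos
          calc stirlingFirst n (k + 1) * stirlingFirst n (k + 2) *
                (stirlingFirst n k * stirlingFirst n (k + 3))
              = (stirlingFirst n k * stirlingFirst n (k + 2)) *
                (stirlingFirst n (k + 1) * stirlingFirst n (k + 3)) := by ring
            _ ≤ stirlingFirst n (k + 1) ^ 2 * stirlingFirst n (k + 2) ^ 2 := by
                have h2' : stirlingFirst n (k + 1) * stirlingFirst n (k + 1 + 2) ≤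
                    stirlingFirst n (k + 1 + 1) ^ 2 := h2
                simp only [show k + 1 + 2 = k + 3 from rfl,
                  show k + 1 + 1 = k + 2 from rfl] at h2'
                exact Nat.mul_le_mul h1 h2'
            _ = stirlingFirst n (k + 1) * stirlingFirst n (k + 2) *
                (stirlingFirst n (k + 1) * stirlingFirst n (k + 2)) := by ring
      have r1 := stirlingFirst_succ_succ n k
      have r2 := stirlingFirst_succ_succ n (k + 1)
      have r3 := stirlingFirst_succ_succ n (k + 2)
      simp only [show k + 1 + 1 = k + 2 from rfl, show k + 1 + 2 = k + 3 from rfl,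
        show k + 2 + 1 = k + 3 from rfl] at h2 r2 r3 ⊢
      rw [r1, r2, r3]
      calc (stirlingFirst n k + n * stirlingFirst n (k + 1)) *
            (stirlingFirst n (k + 2) + n * stirlingFirst n (k + 3))
          = stirlingFirst n k * stirlingFirst n (k + 2) +
              n * (stirlingFirst n k * stirlingFirst n (k + 3)) +
              (n * (stirlingFirst n (k + 1) * stirlingFirst n (k + 2)) +
                n * n * (stirlingFirst n (k + 1) * stirlingFirst n (k + 3))) := by ring
        _ ≤ stirlingFirst n (k + 1) ^ 2 +
              n * (stirlingFirst n (k + 1) * stirlingFirst n (k + 2)) +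
              (n * (stirlingFirst n (k + 1) * stirlingFirst n (k + 2)) +
                n * n * stirlingFirst n (k + 2) ^ 2) :=
            add_le_add (add_le_add h1 (Nat.mul_le_mul_left n h3))
              (add_le_add le_rfl (Nat.mul_le_mul_left (n * n) h2))
        _ = (stirlingFirst n (k + 1) + n * stirlingFirst n (k + 2)) ^ 2 := by ring

/-- The unsigned Stirling numbers of the first kind are log-concave in `k`:
for `n ≥ 1` and `1 ≤ k ≤ n - 1`, `s(n,k-1) · s(n,k+1) ≤ s(n,k)²`. -/
theorem stirlingFirst_log_concave (n k : ℕ) (hn : 1 ≤ n) (hk : 1 ≤ k)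
    (hk' : k ≤ n - 1) :
    stirlingFirst n (k - 1) * stirlingFirst n (k + 1) ≤ stirlingFirst n k ^ 2 := by
  obtain ⟨j, rfl⟩ : ∃ j, k = j + 1 := ⟨k - 1, by omega⟩
  simpa using st_lc n j

end FinRec
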